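/- Let δ_n = n^{−α/(2α+1)} with α > 1/2, let Π = N(0, n^{−1/(2α+1)}Σ_α^{−1}) be the Gaussian sieve prior on ℝ^p with Σ_α = diag(1,2^{2α},…,p^{2α}), suppose p ≤ Cnδ_n² for some C > 0, let θ_{*,p} ∈ ℝ^p with ‖θ_{*,p}‖_α ≤ c₀, and set 𝓑_{n,r} = {θ ∈ ℝ^p : ‖θ−θ_{*,p}‖ ≤ δ_n, ‖θ‖_α ≤ r}. Then for any sufficiently large r ≥ max(4, 2c₀) there exists a constant c > 0, depending only on C, α, c₀ and r, such that Π(𝓑_{n,r}) ≥ e^{−cnδ_n²}. -/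

import Mathlib

open MeasureTheory ProbabilityTheory Real
open scoped ENNReal NNReal BigOperators

noncomputable section

/-- The rescaled Gaussian sieve prior `N(0, n^{-1/(2α+1)}Σ_α^{-1})` on `ℝ^p`, whose
coordinates are independent centred Gaussians with variances `n^{-1/(2α+1)} k^{-2α}`. -/
def sievePrior (α : ℝ) (n p : ℕ) : Measure (EuclideanSpace ℝ (Fin p)) :=
  (Measure.pi fun i : Fin p => gaussianReal 0
      (Real.toNNReal ((n : ℝ) ^ (-(1 : ℝ) / (2 * α + 1)) * (((i : ℕ) : ℝ) + 1) ^ (-(2 * α))))).map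
    ((EuclideanSpace.equiv (Fin p) ℝ).symm)

/-- The Sobolev-type norm `‖θ‖_α` on `ℝ^p`, `‖θ‖_α² = Σ_{k=1}^p k^{2α} θ_k²`. -/
def normα {p : ℕ} (α : ℝ) (θ : EuclideanSpace ℝ (Fin p)) : ℝ :=
  Real.sqrt (∑ i : Fin p, (((i : ℕ) : ℝ) + 1) ^ (2 * α) * θ i ^ 2)

/-- Zero-extension of a vector `θ ∈ ℝ^p` to an element of sequence space. -/
def emb {p : ℕ} (θ : EuclideanSpace ℝ (Fin p)) : ℕ → ℝ :=
  fun k => if h : k < p then θ ⟨k, h⟩ else 0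

/-- `θ` lies in the Sobolev ball of `h^α(ℕ)` of radius `r`:
the series `Σ_k k^{2α}θ_k²` converges and `‖θ‖_α ≤ r`. -/
def SobLe (α : ℝ) (θ : ℕ → ℝ) (r : ℝ) : Prop :=
  Summable (fun k : ℕ => ((k : ℝ) + 1) ^ (2 * α) * θ k ^ 2) ∧
    Real.sqrt (∑' k : ℕ, ((k : ℝ) + 1) ^ (2 * α) * θ k ^ 2) ≤ r

/-- `ℓ²(ℕ)`-distance between two sequences. -/
def l2dist (θ θ' : ℕ → ℝ) : ℝ :=
  Real.sqrt (∑' k : ℕ, (θ k - θ' k) ^ 2)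

/-- The Hellinger distance `h(θ, θ')` between the laws with `ν`-densities
`p_θ` and `p_{θ'}`. -/
def hell {Z : Type*} [MeasurableSpace Z] (ν : Measure Z)
    (pdens : (ℕ → ℝ) → Z → ℝ) (θ θ' : ℕ → ℝ) : ℝ :=
  Real.sqrt (∫ z, (Real.sqrt (pdens θ z) - Real.sqrt (pdens θ' z)) ^ 2 ∂ν)


section AuxSmallBall

lemma sum_inv_sqrt_aux (p : ℕ) :
    ∑ i ∈ Finset.range p, (Real.sqrt (i + 1))⁻¹ ≤ 2 * Real.sqrt p := by
  induction p with
  | zero => simp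
  | succ q ih =>
    rw [Finset.sum_range_succ]
    have h0 : (0:ℝ) ≤ Real.sqrt q := Real.sqrt_nonneg _
    have h1 : (0:ℝ) < Real.sqrt ((q:ℝ) + 1) := Real.sqrt_pos.mpr (by positivity)
    have hq : Real.sqrt q ^ 2 = (q : ℝ) := Real.sq_sqrt (by positivity)
    have hq1 : Real.sqrt ((q:ℝ) + 1) ^ 2 = (q : ℝ) + 1 := Real.sq_sqrt (by positivity)
    have key : (Real.sqrt ((q:ℝ) + 1))⁻¹ ≤ 2 * Real.sqrt ((q:ℝ) + 1) - 2 * Real.sqrt q := by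
      rw [inv_le_iff_one_le_mul₀ h1]
      nlinarith [sq_nonneg (Real.sqrt ((q:ℝ)+1) - Real.sqrt q)]
    have hcast : ((q + 1 : ℕ) : ℝ) = (q : ℝ) + 1 := by push_cast; ring
    rw [hcast]
    linarith [ih]

lemma log_le_rpow_aux (y s : ℝ) (hy : 0 < y) (hs : 0 < s) : Real.log y ≤ y ^ s / s := by
  have h1 := Real.log_le_sub_one_of_pos (Real.rpow_pos_of_pos hy s)
  rw [Real.log_rpow hy] at h1
  have h2 : s * Real.log y ≤ y ^ s := by linarith [Real.rpow_pos_of_pos hy s]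
  rw [le_div_iff₀ hs]
  linarith

lemma gauss_lb_aux (w : ℝ) (hw : 0 < w) (a L : ℝ) (hL : 0 < L) (hLv : L ^ 2 ≤ w) :
    ENNReal.ofReal (L * (Real.sqrt (2 * π * w))⁻¹ * Real.exp (-(a ^ 2 / w) - 1))
      ≤ gaussianReal 0 w.toNNReal (Set.Icc (a - L / 2) (a + L / 2)) := by
  have hvne : w.toNNReal ≠ 0 := by
    simp [Real.toNNReal_eq_zero, not_le, hw]
  have hcoe : ((w.toNNReal : ℝ≥0) : ℝ) = w := Real.coe_toNNReal _ hw.le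
  rw [gaussianReal_apply _ hvne]
  have hpdf : ∀ x ∈ Set.Icc (a - L / 2) (a + L / 2),
      ENNReal.ofReal ((Real.sqrt (2 * π * w))⁻¹ * Real.exp (-(a ^ 2 / w) - 1))
        ≤ gaussianPDF 0 w.toNNReal x := by
    intro x hx
    unfold gaussianPDF gaussianPDFReal
    rw [hcoe]
    apply ENNReal.ofReal_le_ofReal
    apply mul_le_mul_of_nonneg_left _ (by positivity)
    apply Real.exp_le_exp.mpr
    simp only [Set.mem_Icc] at hx
    have h1 : (x - 0) ^ 2 ≤ 2 * a ^ 2 + w / 2 := by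
      nlinarith [mul_nonneg (by linarith [hx.2] : (0:ℝ) ≤ a + L / 2 - x)
        (by linarith [hx.1] : (0:ℝ) ≤ x - (a - L / 2)), sq_nonneg (x - 2 * a), hLv]
    have h2 : (x - 0) ^ 2 / (2 * w) ≤ a ^ 2 / w + 1 := by
      rw [div_le_iff₀ (by positivity)]
      have : (a ^ 2 / w) * (2 * w) = 2 * a ^ 2 := by field_simp
      nlinarith [hw]
    have h3 : -(x - 0) ^ 2 / (2 * w) = -((x - 0) ^ 2 / (2 * w)) := by ring
    rw [h3]; linarith
  calc ENNReal.ofReal (L * (Real.sqrt (2 * π * w))⁻¹ * Real.exp (-(a ^ 2 / w) - 1))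
      = ENNReal.ofReal ((Real.sqrt (2 * π * w))⁻¹ * Real.exp (-(a ^ 2 / w) - 1))
          * ENNReal.ofReal L := by
        rw [← ENNReal.ofReal_mul (by positivity)]; ring_nf
    _ = ENNReal.ofReal ((Real.sqrt (2 * π * w))⁻¹ * Real.exp (-(a ^ 2 / w) - 1))
          * volume (Set.Icc (a - L/2) (a + L/2)) := by
        rw [Real.volume_Icc]; ring_nf
    _ ≤ ∫⁻ x in Set.Icc (a - L / 2) (a + L / 2), gaussianPDF 0 w.toNNReal x := by
        rw [← setLIntegral_const]
        exact setLIntegral_mono (measurable_gaussianPDF _ _) hpdf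

lemma pi_box_lb_aux {p : ℕ} (v : Fin p → ℝ) (hv : ∀ i, 0 < v i)
    (a L : Fin p → ℝ) (hL : ∀ i, 0 < L i) (hLv : ∀ i, L i ^ 2 ≤ v i) :
    ENNReal.ofReal (Real.exp (∑ i, (Real.log (L i) - Real.log (Real.sqrt (2 * π * v i))
        - (a i) ^ 2 / (v i) - 1)))
      ≤ Measure.pi (fun i => gaussianReal 0 (v i).toNNReal)
          (Set.pi Set.univ fun i => Set.Icc (a i - L i / 2) (a i + L i / 2)) := by
  rw [Measure.pi_pi, Real.exp_sum,
    ENNReal.ofReal_prod_of_nonneg (fun i _ => (Real.exp_pos _).le)]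
  refine Finset.prod_le_prod' fun i _ => ?_
  refine le_trans (le_of_eq ?_) (gauss_lb_aux (v i) (hv i) (a i) (L i) (hL i) (hLv i))
  congr 1
  have hsq : (0:ℝ) < Real.sqrt (2 * π * v i) :=
    Real.sqrt_pos.mpr (mul_pos (by positivity : (0:ℝ) < 2 * π) (hv i))
  rw [show Real.log (L i) - Real.log (Real.sqrt (2 * π * v i)) - (a i) ^ 2 / (v i) - 1
      = (Real.log (L i) + (- Real.log (Real.sqrt (2 * π * v i)))) + (-((a i) ^ 2 / (v i)) - 1)
      from by ring, Real.exp_add, Real.exp_add, Real.exp_log (hL i), Real.exp_neg,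
    Real.exp_log hsq]

lemma rpow_id_aux (α : ℝ) (hα : 0 < α) (n p : ℕ) (hn : 0 < n) (i : Fin p) :
    (Real.sqrt ((n:ℝ) ^ (-(1:ℝ) / (2 * α + 1)) * (((i:ℕ):ℝ) + 1) ^ (-(2 * α)))
        / ((n:ℝ) ^ (-(α / (2 * α + 1))) / Real.sqrt p)) ^ (1 / (2 * α))
      = (n:ℝ) ^ ((1 - 1 / (2 * α)) / (2 * (2 * α + 1))) * (p:ℝ) ^ ((1 / (2 * α)) / 2)
          * (Real.sqrt (((i:ℕ):ℝ) + 1))⁻¹ := by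
  have hx0 : (0:ℝ) < n := by exact_mod_cast hn
  have hp0 : (0:ℝ) < p := by exact_mod_cast i.pos
  have hk0 : (0:ℝ) < ((i:ℕ):ℝ) + 1 := by positivity
  have hA : (0:ℝ) < 2 * α + 1 := by linarith
  have hv0 : (0:ℝ) < (n:ℝ) ^ (-(1:ℝ) / (2 * α + 1)) * (((i:ℕ):ℝ) + 1) ^ (-(2 * α)) :=
    mul_pos (Real.rpow_pos_of_pos hx0 _) (Real.rpow_pos_of_pos hk0 _)
  have hσ0 : (0:ℝ) < Real.sqrt ((n:ℝ) ^ (-(1:ℝ) / (2 * α + 1)) * (((i:ℕ):ℝ) + 1) ^ (-(2 * α))) :=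
    Real.sqrt_pos.mpr hv0
  have hsp : (0:ℝ) < Real.sqrt p := Real.sqrt_pos.mpr hp0
  have hδ0 : (0:ℝ) < (n:ℝ) ^ (-(α / (2 * α + 1))) := Real.rpow_pos_of_pos hx0 _
  have hski : (0:ℝ) < Real.sqrt (((i:ℕ):ℝ) + 1) := Real.sqrt_pos.mpr hk0
  have hLHS0 : (0:ℝ) < (Real.sqrt ((n:ℝ) ^ (-(1:ℝ) / (2 * α + 1)) * (((i:ℕ):ℝ) + 1) ^ (-(2 * α)))
      / ((n:ℝ) ^ (-(α / (2 * α + 1))) / Real.sqrt p)) ^ (1 / (2 * α)) :=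
    Real.rpow_pos_of_pos (by positivity) _
  have hRHS0 : (0:ℝ) < (n:ℝ) ^ ((1 - 1 / (2 * α)) / (2 * (2 * α + 1))) * (p:ℝ) ^ ((1 / (2 * α)) / 2)
      * (Real.sqrt (((i:ℕ):ℝ) + 1))⁻¹ := by positivity
  have hlog : Real.log ((Real.sqrt ((n:ℝ) ^ (-(1:ℝ) / (2 * α + 1)) * (((i:ℕ):ℝ) + 1) ^ (-(2 * α)))
      / ((n:ℝ) ^ (-(α / (2 * α + 1))) / Real.sqrt p)) ^ (1 / (2 * α)))
      = Real.log ((n:ℝ) ^ ((1 - 1 / (2 * α)) / (2 * (2 * α + 1))) * (p:ℝ) ^ ((1 / (2 * α)) / 2)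
          * (Real.sqrt (((i:ℕ):ℝ) + 1))⁻¹) := by
    rw [Real.log_rpow (by positivity), Real.log_div hσ0.ne' (by positivity),
      Real.log_sqrt hv0.le, Real.log_mul (Real.rpow_pos_of_pos hx0 _).ne'
        (Real.rpow_pos_of_pos hk0 _).ne',
      Real.log_div hδ0.ne' hsp.ne', Real.log_mul (by positivity) (by positivity),
      Real.log_mul (Real.rpow_pos_of_pos hx0 _).ne' (Real.rpow_pos_of_pos hp0 _).ne',
      Real.log_inv, Real.log_sqrt hk0.le, Real.log_sqrt hp0.le,
      Real.log_rpow hx0, Real.log_rpow hk0, Real.log_rpow hx0, Real.log_rpow hx0,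
      Real.log_rpow hp0]
    field_simp
    ring
  calc (Real.sqrt ((n:ℝ) ^ (-(1:ℝ) / (2 * α + 1)) * (((i:ℕ):ℝ) + 1) ^ (-(2 * α)))
      / ((n:ℝ) ^ (-(α / (2 * α + 1))) / Real.sqrt p)) ^ (1 / (2 * α))
      = Real.exp (Real.log ((Real.sqrt ((n:ℝ) ^ (-(1:ℝ) / (2 * α + 1)) * (((i:ℕ):ℝ) + 1) ^ (-(2 * α)))
          / ((n:ℝ) ^ (-(α / (2 * α + 1))) / Real.sqrt p)) ^ (1 / (2 * α)))) :=
        (Real.exp_log hLHS0).symm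
    _ = Real.exp (Real.log ((n:ℝ) ^ ((1 - 1 / (2 * α)) / (2 * (2 * α + 1)))
          * (p:ℝ) ^ ((1 / (2 * α)) / 2) * (Real.sqrt (((i:ℕ):ℝ) + 1))⁻¹)) := by rw [hlog]
    _ = _ := Real.exp_log hRHS0

end AuxSmallBall

set_option maxHeartbeats 2000000

/-- **Lemma 5.12 (small-ball probability of the rescaled Gaussian sieve prior).** With
`δ_n = n^{-α/(2α+1)}` and `p ≤ Cnδ_n²`, for any sufficiently large `r ≥ max(4, 2c₀)`
there is `c > 0` (depending only on `C, α, c₀, r`) with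
`Π(𝓑_{n,r}) ≥ e^{-cnδ_n²}`, where
`𝓑_{n,r} = {θ ∈ ℝ^p : ‖θ - θ_{*,p}‖ ≤ δ_n, ‖θ‖_α ≤ r}`. -/
theorem sieve_prior_small_ball
    (α C c₀ : ℝ) (hα : 1 / 2 < α) (hC : 0 < C) (hc₀ : 0 < c₀) :
    ∃ r₀ : ℝ, ∀ r : ℝ, max 4 (2 * c₀) ≤ r → r₀ ≤ r →
      ∃ c > (0 : ℝ), ∀ (n p : ℕ) (θstar : EuclideanSpace ℝ (Fin p)),
        0 < n →
        (p : ℝ) ≤ C * n * ((n : ℝ) ^ (-(α / (2 * α + 1)))) ^ 2 →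
        normα α θstar ≤ c₀ →
        ENNReal.ofReal (Real.exp (-c * n * ((n : ℝ) ^ (-(α / (2 * α + 1)))) ^ 2))
          ≤ sievePrior α n p
              {θ : EuclideanSpace ℝ (Fin p) |
                ‖θ - θstar‖ ≤ (n : ℝ) ^ (-(α / (2 * α + 1))) ∧ normα α θ ≤ r} := by
  have hα0 : (0:ℝ) < α := by linarith
  refine ⟨Real.sqrt (2 * c₀ ^ 2 + 2 * C ^ (2 * α)), fun r hr4 hrr₀ => ?_⟩
  have hCq : (0:ℝ) < C ^ ((1 / (2 * α) + 1) / 2) := Real.rpow_pos_of_pos hC _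
  set cc : ℝ := 4 * α * C ^ ((1 / (2 * α) + 1) / 2) + c₀ ^ 2 + 3 * C + 1 with hcc_def
  have hccpos : 0 < cc := by
    rw [hcc_def]
    nlinarith [mul_pos hα0 hCq, sq_nonneg c₀, hC]
  refine ⟨cc, hccpos, ?_⟩
  intro n p θstar hn hple hθ
  have hx0 : (0:ℝ) < n := by exact_mod_cast hn
  have hA : (0:ℝ) < 2 * α + 1 := by linarith
  set δ : ℝ := (n:ℝ) ^ (-(α / (2 * α + 1))) with hδ_def
  have hδ0 : (0:ℝ) < δ := Real.rpow_pos_of_pos hx0 _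
  set NN : ℝ := (n:ℝ) ^ (1 / (2 * α + 1)) with hNN_def
  have hNN0 : (0:ℝ) < NN := Real.rpow_pos_of_pos hx0 _
  have hδsq : δ ^ 2 = (n:ℝ) ^ (-(α / (2 * α + 1)) * 2) := by
    rw [hδ_def, ← Real.rpow_natCast ((n:ℝ) ^ (-(α / (2 * α + 1)))) 2, ← Real.rpow_mul hx0.le]
    norm_num
  have hNδ : (n:ℝ) * δ ^ 2 = NN := by
    rw [hδsq, hNN_def]
    calc (n:ℝ) * (n:ℝ) ^ (-(α / (2 * α + 1)) * 2)
        = (n:ℝ) ^ (1:ℝ) * (n:ℝ) ^ (-(α / (2 * α + 1)) * 2) := by rw [Real.rpow_one]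
      _ = (n:ℝ) ^ (1 + -(α / (2 * α + 1)) * 2) := (Real.rpow_add hx0 _ _).symm
      _ = (n:ℝ) ^ (1 / (2 * α + 1)) := by
          congr 1
          field_simp
          ring
  have hpN : (p:ℝ) ≤ C * NN := by
    rw [← hNδ, ← mul_assoc]
    exact hple
  set v : Fin p → ℝ := fun i => (n:ℝ) ^ (-(1:ℝ) / (2 * α + 1)) * (((i:ℕ):ℝ) + 1) ^ (-(2 * α))
    with hv_def
  have hki : ∀ i : Fin p, (0:ℝ) < ((i:ℕ):ℝ) + 1 := fun i => by positivity
  have hv0 : ∀ i, 0 < v i := fun i => by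
    simp only [hv_def]
    exact mul_pos (Real.rpow_pos_of_pos hx0 _) (Real.rpow_pos_of_pos (hki i) _)
  set ℓ : Fin p → ℝ := fun i => min (δ / Real.sqrt p) (Real.sqrt (v i)) with hℓ_def
  have hεpos : ∀ _i : Fin p, (0:ℝ) < δ / Real.sqrt p := fun i =>
    div_pos hδ0 (Real.sqrt_pos.mpr (by exact_mod_cast i.pos))
  have hℓpos : ∀ i : Fin p, 0 < ℓ i := fun i => by
    simp only [hℓ_def]
    exact lt_min (hεpos i) (Real.sqrt_pos.mpr (hv0 i))
  have hℓε : ∀ i : Fin p, ℓ i ≤ δ / Real.sqrt p := fun i => by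
    simp only [hℓ_def]; exact min_le_left _ _
  have hℓv : ∀ i : Fin p, ℓ i ^ 2 ≤ v i := fun i => by
    have h1 : ℓ i ≤ Real.sqrt (v i) := by simp only [hℓ_def]; exact min_le_right _ _
    calc ℓ i ^ 2 ≤ Real.sqrt (v i) ^ 2 := pow_le_pow_left₀ (hℓpos i).le h1 2
      _ = v i := Real.sq_sqrt (hv0 i).le
  have hθsum : ∑ i : Fin p, (((i:ℕ):ℝ) + 1) ^ (2 * α) * (θstar i) ^ 2 ≤ c₀ ^ 2 := by
    have hS0 : (0:ℝ) ≤ ∑ i : Fin p, (((i:ℕ):ℝ) + 1) ^ (2 * α) * (θstar i) ^ 2 :=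
      Finset.sum_nonneg fun i _ => by positivity
    simp only [normα] at hθ
    calc ∑ i : Fin p, (((i:ℕ):ℝ) + 1) ^ (2 * α) * (θstar i) ^ 2
        = Real.sqrt (∑ i : Fin p, (((i:ℕ):ℝ) + 1) ^ (2 * α) * (θstar i) ^ 2) ^ 2 := (Real.sq_sqrt hS0).symm
      _ ≤ c₀ ^ 2 := pow_le_pow_left₀ (Real.sqrt_nonneg _) hθ 2
  have hpε : (p:ℝ) * (δ / Real.sqrt p) ^ 2 ≤ δ ^ 2 := by
    rcases Nat.eq_zero_or_pos p with h | h
    · simp [h]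
      positivity
    · have hp0 : (0:ℝ) < p := by exact_mod_cast h
      rw [div_pow, Real.sq_sqrt hp0.le, mul_comm, div_mul_cancel₀ _ hp0.ne']
  have hNN2α : NN ^ (2 * α) * δ ^ 2 = 1 := by
    have h1 : NN ^ (2 * α) = (n:ℝ) ^ (1 / (2 * α + 1) * (2 * α)) := by
      rw [hNN_def, ← Real.rpow_mul hx0.le]
    rw [h1, hδsq, ← Real.rpow_add hx0,
      show 1 / (2 * α + 1) * (2 * α) + -(α / (2 * α + 1)) * 2 = 0 from by field_simp; ring]
    exact Real.rpow_zero _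
  have hppow : (p:ℝ) ^ (2 * α) * δ ^ 2 ≤ C ^ (2 * α) := by
    have h1 : (p:ℝ) ^ (2 * α) ≤ (C * NN) ^ (2 * α) :=
      Real.rpow_le_rpow (Nat.cast_nonneg p) hpN (by positivity)
    have h2 : (C * NN) ^ (2 * α) = C ^ (2 * α) * NN ^ (2 * α) := Real.mul_rpow hC.le hNN0.le
    calc (p:ℝ) ^ (2 * α) * δ ^ 2 ≤ (C ^ (2 * α) * NN ^ (2 * α)) * δ ^ 2 := by
          rw [← h2]
          exact mul_le_mul_of_nonneg_right h1 (by positivity)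
      _ = C ^ (2 * α) * (NN ^ (2 * α) * δ ^ 2) := by ring
      _ = C ^ (2 * α) := by rw [hNN2α, mul_one]
  set S : Set (EuclideanSpace ℝ (Fin p)) :=
    {θ : EuclideanSpace ℝ (Fin p) | ‖θ - θstar‖ ≤ δ ∧ normα α θ ≤ r} with hS_def
  have hSmeas : MeasurableSet S := by
    rw [hS_def]
    have h1 : MeasurableSet {θ : EuclideanSpace ℝ (Fin p) | ‖θ - θstar‖ ≤ δ} :=
      measurableSet_le ((continuous_id.sub continuous_const).norm.measurable) measurable_const
    have h2 : MeasurableSet {θ : EuclideanSpace ℝ (Fin p) | normα α θ ≤ r} := by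
      have hm : Measurable fun θ : EuclideanSpace ℝ (Fin p) =>
          Real.sqrt (∑ i : Fin p, (((i:ℕ):ℝ) + 1) ^ (2 * α) * (θ i) ^ 2) :=
        (Finset.measurable_sum _ fun i _ => measurable_const.mul
          (((measurable_pi_apply i).comp
            (MeasurableEquiv.toLp 2 (Fin p → ℝ)).symm.measurable).pow_const 2)).sqrt
      exact measurableSet_le hm measurable_const
    exact h1.inter h2
  have hBox : (Set.pi Set.univ fun i => Set.Icc (θstar i - ℓ i / 2) (θstar i + ℓ i / 2))
      ⊆ (⇑(EuclideanSpace.equiv (Fin p) ℝ).symm) ⁻¹' S := by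
    intro y hy
    simp only [Set.mem_pi, Set.mem_univ, forall_true_left, Set.mem_Icc] at hy
    have hyi : ∀ i : Fin p, |y i - θstar i| ≤ δ / Real.sqrt p := by
      intro i
      have h1 := (hy i).1
      have h2 := (hy i).2
      have h3 := hℓε i
      have h4 := (hℓpos i).le
      rw [abs_le]
      constructor <;> linarith
    simp only [Set.mem_preimage, hS_def, Set.mem_setOf_eq]
    constructor
    · have key : ∑ i, ‖((EuclideanSpace.equiv (Fin p) ℝ).symm y - θstar) i‖ ^ 2 ≤ δ ^ 2 := by
        have hterm : ∀ i : Fin p, ‖((EuclideanSpace.equiv (Fin p) ℝ).symm y - θstar) i‖ ^ 2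
            ≤ (δ / Real.sqrt p) ^ 2 := by
          intro i
          have he : ‖((EuclideanSpace.equiv (Fin p) ℝ).symm y - θstar) i‖ = |y i - θstar i| := rfl
          rw [he]
          exact pow_le_pow_left₀ (abs_nonneg _) (hyi i) 2
        calc ∑ i, ‖((EuclideanSpace.equiv (Fin p) ℝ).symm y - θstar) i‖ ^ 2
            ≤ ∑ _i : Fin p, (δ / Real.sqrt p) ^ 2 := Finset.sum_le_sum fun i _ => hterm i
          _ = (p:ℝ) * (δ / Real.sqrt p) ^ 2 := by
              rw [Finset.sum_const, Finset.card_univ, Fintype.card_fin, nsmul_eq_mul]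
          _ ≤ δ ^ 2 := hpε
      rw [EuclideanSpace.norm_eq]
      calc Real.sqrt (∑ i, ‖((EuclideanSpace.equiv (Fin p) ℝ).symm y - θstar) i‖ ^ 2)
          ≤ Real.sqrt (δ ^ 2) := Real.sqrt_le_sqrt key
        _ = δ := Real.sqrt_sq hδ0.le
    · simp only [normα]
      have key2 : ∑ i : Fin p, (((i:ℕ):ℝ) + 1) ^ (2 * α)
            * (((EuclideanSpace.equiv (Fin p) ℝ).symm y) i) ^ 2
          ≤ 2 * c₀ ^ 2 + 2 * C ^ (2 * α) := by
        have hterm : ∀ i : Fin p, (((i:ℕ):ℝ) + 1) ^ (2 * α)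
              * (((EuclideanSpace.equiv (Fin p) ℝ).symm y) i) ^ 2
            ≤ 2 * ((((i:ℕ):ℝ) + 1) ^ (2 * α) * (θstar i) ^ 2)
              + 2 * ((p:ℝ) ^ (2 * α) * (δ / Real.sqrt p) ^ 2) := by
          intro i
          have hyy : (((EuclideanSpace.equiv (Fin p) ℝ).symm y) i) = y i := rfl
          rw [hyy]
          have h1 : (y i) ^ 2 ≤ 2 * (θstar i) ^ 2 + 2 * (y i - θstar i) ^ 2 := by
            nlinarith [sq_nonneg (y i - 2 * θstar i)]
          have h2 : (y i - θstar i) ^ 2 ≤ (δ / Real.sqrt p) ^ 2 := by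
            calc (y i - θstar i) ^ 2 = |y i - θstar i| ^ 2 := (sq_abs _).symm
              _ ≤ (δ / Real.sqrt p) ^ 2 := pow_le_pow_left₀ (abs_nonneg _) (hyi i) 2
          have hk2α : (((i:ℕ):ℝ) + 1) ^ (2 * α) ≤ (p:ℝ) ^ (2 * α) := by
            apply Real.rpow_le_rpow (hki i).le _ (by positivity)
            exact_mod_cast i.isLt
          have hknn : (0:ℝ) ≤ (((i:ℕ):ℝ) + 1) ^ (2 * α) := (Real.rpow_pos_of_pos (hki i) _).le
          have hpnn : (0:ℝ) ≤ (p:ℝ) ^ (2 * α) := Real.rpow_nonneg (Nat.cast_nonneg p) _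
          calc (((i:ℕ):ℝ) + 1) ^ (2 * α) * (y i) ^ 2
              ≤ (((i:ℕ):ℝ) + 1) ^ (2 * α) * (2 * (θstar i) ^ 2 + 2 * (y i - θstar i) ^ 2) :=
                mul_le_mul_of_nonneg_left h1 hknn
            _ = 2 * ((((i:ℕ):ℝ) + 1) ^ (2 * α) * (θstar i) ^ 2)
                + 2 * ((((i:ℕ):ℝ) + 1) ^ (2 * α) * (y i - θstar i) ^ 2) := by ring
            _ ≤ 2 * ((((i:ℕ):ℝ) + 1) ^ (2 * α) * (θstar i) ^ 2)
                + 2 * ((p:ℝ) ^ (2 * α) * (δ / Real.sqrt p) ^ 2) := by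
                have := mul_le_mul hk2α h2 (sq_nonneg _) hpnn
                linarith
        calc ∑ i : Fin p, (((i:ℕ):ℝ) + 1) ^ (2 * α) * (((EuclideanSpace.equiv (Fin p) ℝ).symm y) i) ^ 2
            ≤ ∑ i : Fin p, (2 * ((((i:ℕ):ℝ) + 1) ^ (2 * α) * (θstar i) ^ 2)
                + 2 * ((p:ℝ) ^ (2 * α) * (δ / Real.sqrt p) ^ 2)) :=
              Finset.sum_le_sum fun i _ => hterm i
          _ = 2 * (∑ i : Fin p, (((i:ℕ):ℝ) + 1) ^ (2 * α) * (θstar i) ^ 2)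
              + (p:ℝ) * (2 * ((p:ℝ) ^ (2 * α) * (δ / Real.sqrt p) ^ 2)) := by
              rw [Finset.sum_add_distrib, ← Finset.mul_sum, Finset.sum_const, Finset.card_univ,
                Fintype.card_fin, nsmul_eq_mul]
          _ ≤ 2 * c₀ ^ 2 + 2 * C ^ (2 * α) := by
              have e2 : (p:ℝ) ^ (2 * α) * ((p:ℝ) * (δ / Real.sqrt p) ^ 2)
                  ≤ (p:ℝ) ^ (2 * α) * δ ^ 2 :=
                mul_le_mul_of_nonneg_left hpε (Real.rpow_nonneg (Nat.cast_nonneg p) _)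
              nlinarith [hθsum, hppow]
      calc Real.sqrt (∑ i : Fin p, (((i:ℕ):ℝ) + 1) ^ (2 * α)
            * (((EuclideanSpace.equiv (Fin p) ℝ).symm y) i) ^ 2)
          ≤ Real.sqrt (2 * c₀ ^ 2 + 2 * C ^ (2 * α)) := Real.sqrt_le_sqrt key2
        _ ≤ r := hrr₀
  have h1 : sievePrior α n p S
      = Measure.pi (fun i : Fin p => gaussianReal 0 (Real.toNNReal (v i)))
          ((⇑(EuclideanSpace.equiv (Fin p) ℝ).symm) ⁻¹' S) := by
    simp only [hv_def]
    exact Measure.map_apply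
      ((EuclideanSpace.equiv (Fin p) ℝ).symm.continuous.measurable) hSmeas
  have h2 := pi_box_lb_aux v hv0 (fun i => θstar i) ℓ hℓpos hℓv
  have h3 : Measure.pi (fun i : Fin p => gaussianReal 0 (Real.toNNReal (v i)))
        (Set.pi Set.univ fun i => Set.Icc (θstar i - ℓ i / 2) (θstar i + ℓ i / 2))
      ≤ Measure.pi (fun i : Fin p => gaussianReal 0 (Real.toNNReal (v i)))
          ((⇑(EuclideanSpace.equiv (Fin p) ℝ).symm) ⁻¹' S) := measure_mono hBox
  -- the key exponential estimate
  have hlog3 : Real.log (Real.sqrt (2 * π)) + 1 ≤ 3 := by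
    have h2π : (0:ℝ) < 2 * π := Real.two_pi_pos
    have h9 : Real.sqrt (2 * π) ≤ 3 := by
      have h49 : (2:ℝ) * π ≤ 9 := by nlinarith [Real.pi_le_four]
      calc Real.sqrt (2 * π) ≤ Real.sqrt 9 := Real.sqrt_le_sqrt h49
        _ = 3 := by
            rw [show (9:ℝ) = 3 ^ 2 by norm_num, Real.sqrt_sq (by norm_num : (0:ℝ) ≤ 3)]
    have := Real.log_le_sub_one_of_pos (Real.sqrt_pos.mpr h2π)
    linarith
  have hlogℓ : ∀ i : Fin p, Real.log (Real.sqrt (v i)) - Real.log (ℓ i)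
      ≤ 2 * α * ((Real.sqrt (v i) / (δ / Real.sqrt p)) ^ (1 / (2 * α))) := by
    intro i
    have hε : (0:ℝ) < δ / Real.sqrt p := hεpos i
    have hq0 : (0:ℝ) < Real.sqrt (v i) / (δ / Real.sqrt p) :=
      div_pos (Real.sqrt_pos.mpr (hv0 i)) hε
    rcases le_total (δ / Real.sqrt p) (Real.sqrt (v i)) with h | h
    · have hℓeq : ℓ i = δ / Real.sqrt p := by simp only [hℓ_def]; exact min_eq_left h
      rw [hℓeq, ← Real.log_div (Real.sqrt_pos.mpr (hv0 i)).ne' hε.ne']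
      have hlr := log_le_rpow_aux _ (1 / (2 * α)) hq0 (by positivity)
      have heq : (Real.sqrt (v i) / (δ / Real.sqrt p)) ^ (1 / (2 * α)) / (1 / (2 * α))
          = 2 * α * ((Real.sqrt (v i) / (δ / Real.sqrt p)) ^ (1 / (2 * α))) := by
        rw [one_div, div_eq_mul_inv, inv_inv]
        ring
      linarith
    · have hℓeq : ℓ i = Real.sqrt (v i) := by simp only [hℓ_def]; exact min_eq_right h
      rw [hℓeq, sub_self]
      positivity
  have hid : ∀ i : Fin p, (Real.sqrt (v i) / (δ / Real.sqrt p)) ^ (1 / (2 * α))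
      = (n:ℝ) ^ ((1 - 1 / (2 * α)) / (2 * (2 * α + 1))) * (p:ℝ) ^ ((1 / (2 * α)) / 2)
          * (Real.sqrt (((i:ℕ):ℝ) + 1))⁻¹ := by
    intro i
    simp only [hv_def, hδ_def]
    exact rpow_id_aux α hα0 n p hn i
  have hsum1 : ∑ i, 2 * α * ((Real.sqrt (v i) / (δ / Real.sqrt p)) ^ (1 / (2 * α)))
      ≤ 4 * α * C ^ ((1 / (2 * α) + 1) / 2) * NN := by
    have e1 : ∑ i, 2 * α * ((Real.sqrt (v i) / (δ / Real.sqrt p)) ^ (1 / (2 * α)))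
        = 2 * α * ((n:ℝ) ^ ((1 - 1 / (2 * α)) / (2 * (2 * α + 1)))
            * (p:ℝ) ^ ((1 / (2 * α)) / 2)) * ∑ i : Fin p, (Real.sqrt (((i:ℕ):ℝ) + 1))⁻¹ := by
      rw [Finset.mul_sum]
      exact Finset.sum_congr rfl fun i _ => by rw [hid i]; ring
    rw [e1]
    have e2 : ∑ i : Fin p, (Real.sqrt (((i:ℕ):ℝ) + 1))⁻¹ ≤ 2 * Real.sqrt p := by
      rw [Fin.sum_univ_eq_sum_range (fun j => (Real.sqrt ((j:ℝ) + 1))⁻¹) p]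
      exact sum_inv_sqrt_aux p
    have hEpt0 : (0:ℝ) ≤ 2 * α * ((n:ℝ) ^ ((1 - 1 / (2 * α)) / (2 * (2 * α + 1)))
        * (p:ℝ) ^ ((1 / (2 * α)) / 2)) := by positivity
    have hsq : Real.sqrt (p:ℝ) = (p:ℝ) ^ ((1:ℝ) / 2) := Real.sqrt_eq_rpow _
    have hpp : (p:ℝ) ^ ((1 / (2 * α)) / 2) * (p:ℝ) ^ ((1:ℝ) / 2)
        = (p:ℝ) ^ ((1 / (2 * α)) / 2 + 1 / 2) :=
      (Real.rpow_add_of_nonneg (Nat.cast_nonneg p) (by positivity) (by norm_num)).symm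
    have hple2 : (p:ℝ) ^ ((1 / (2 * α)) / 2 + 1 / 2) ≤ (C * NN) ^ ((1 / (2 * α)) / 2 + 1 / 2) :=
      Real.rpow_le_rpow (Nat.cast_nonneg p) hpN (by positivity)
    have hCN : (C * NN) ^ ((1 / (2 * α)) / 2 + 1 / 2)
        = C ^ ((1 / (2 * α)) / 2 + 1 / 2) * NN ^ ((1 / (2 * α)) / 2 + 1 / 2) :=
      Real.mul_rpow hC.le hNN0.le
    have hnNN : (n:ℝ) ^ ((1 - 1 / (2 * α)) / (2 * (2 * α + 1)))
        * NN ^ ((1 / (2 * α)) / 2 + 1 / 2) = NN := by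
      rw [hNN_def, ← Real.rpow_mul hx0.le, ← Real.rpow_add hx0]
      congr 1
      field_simp
      ring
    have hexpC : C ^ ((1 / (2 * α)) / 2 + 1 / 2) = C ^ ((1 / (2 * α) + 1) / 2) := by
      congr 1
      ring
    have hCpos2 : (0:ℝ) < C ^ ((1 / (2 * α)) / 2 + 1 / 2) := Real.rpow_pos_of_pos hC _
    calc 2 * α * ((n:ℝ) ^ ((1 - 1 / (2 * α)) / (2 * (2 * α + 1)))
            * (p:ℝ) ^ ((1 / (2 * α)) / 2)) * ∑ i : Fin p, (Real.sqrt (((i:ℕ):ℝ) + 1))⁻¹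
        ≤ 2 * α * ((n:ℝ) ^ ((1 - 1 / (2 * α)) / (2 * (2 * α + 1)))
            * (p:ℝ) ^ ((1 / (2 * α)) / 2)) * (2 * Real.sqrt p) :=
          mul_le_mul_of_nonneg_left e2 hEpt0
      _ = 4 * α * ((n:ℝ) ^ ((1 - 1 / (2 * α)) / (2 * (2 * α + 1)))
            * ((p:ℝ) ^ ((1 / (2 * α)) / 2) * Real.sqrt (p:ℝ))) := by ring
      _ = 4 * α * ((n:ℝ) ^ ((1 - 1 / (2 * α)) / (2 * (2 * α + 1)))
            * (p:ℝ) ^ ((1 / (2 * α)) / 2 + 1 / 2)) := by rw [hsq, hpp]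
      _ ≤ 4 * α * ((n:ℝ) ^ ((1 - 1 / (2 * α)) / (2 * (2 * α + 1)))
            * (C ^ ((1 / (2 * α)) / 2 + 1 / 2) * NN ^ ((1 / (2 * α)) / 2 + 1 / 2))) := by
          apply mul_le_mul_of_nonneg_left _ (by positivity : (0:ℝ) ≤ 4 * α)
          apply mul_le_mul_of_nonneg_left _ (Real.rpow_pos_of_pos hx0 _).le
          rw [← hCN]
          exact hple2
      _ = 4 * α * C ^ ((1 / (2 * α)) / 2 + 1 / 2)
            * ((n:ℝ) ^ ((1 - 1 / (2 * α)) / (2 * (2 * α + 1)))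
              * NN ^ ((1 / (2 * α)) / 2 + 1 / 2)) := by ring
      _ = 4 * α * C ^ ((1 / (2 * α)) / 2 + 1 / 2) * NN := by rw [hnNN]
      _ = 4 * α * C ^ ((1 / (2 * α) + 1) / 2) * NN := by rw [hexpC]
  have hvinv : ∀ i : Fin p, (θstar i) ^ 2 / (v i)
      = NN * ((((i:ℕ):ℝ) + 1) ^ (2 * α) * (θstar i) ^ 2) := by
    intro i
    simp only [hv_def]
    rw [show (-(1:ℝ) / (2 * α + 1)) = -(1 / (2 * α + 1)) from by ring,
      show (-(2 * α)) = -(2 * α) from rfl, Real.rpow_neg hx0.le,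
      Real.rpow_neg (hki i).le, div_eq_mul_inv, mul_inv, inv_inv, inv_inv, hNN_def]
    ring
  have hsum2 : ∑ i, (θstar i) ^ 2 / (v i) ≤ c₀ ^ 2 * NN := by
    calc ∑ i, (θstar i) ^ 2 / (v i)
        = NN * ∑ i : Fin p, (((i:ℕ):ℝ) + 1) ^ (2 * α) * (θstar i) ^ 2 := by
          rw [Finset.mul_sum]
          exact Finset.sum_congr rfl fun i _ => hvinv i
      _ ≤ NN * c₀ ^ 2 := mul_le_mul_of_nonneg_left hθsum hNN0.le
      _ = c₀ ^ 2 * NN := mul_comm _ _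
  have hper : ∀ i : Fin p, Real.log (Real.sqrt (2 * π * v i)) - Real.log (ℓ i)
        + (θstar i) ^ 2 / (v i) + 1
      ≤ 3 + 2 * α * ((Real.sqrt (v i) / (δ / Real.sqrt p)) ^ (1 / (2 * α)))
        + (θstar i) ^ 2 / (v i) := by
    intro i
    have hs : Real.sqrt (2 * π * v i) = Real.sqrt (2 * π) * Real.sqrt (v i) :=
      Real.sqrt_mul (by positivity) _
    rw [hs, Real.log_mul (Real.sqrt_pos.mpr Real.two_pi_pos).ne'
      (Real.sqrt_pos.mpr (hv0 i)).ne']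
    have := hlogℓ i
    linarith [hlog3]
  have hEst' : ∑ i, (Real.log (Real.sqrt (2 * π * v i)) - Real.log (ℓ i)
        + (θstar i) ^ 2 / (v i) + 1) ≤ cc * NN := by
    calc ∑ i, (Real.log (Real.sqrt (2 * π * v i)) - Real.log (ℓ i)
          + (θstar i) ^ 2 / (v i) + 1)
        ≤ ∑ i, (3 + 2 * α * ((Real.sqrt (v i) / (δ / Real.sqrt p)) ^ (1 / (2 * α)))
            + (θstar i) ^ 2 / (v i)) := Finset.sum_le_sum fun i _ => hper i
      _ = (p:ℝ) * 3 + ∑ i, 2 * α * ((Real.sqrt (v i) / (δ / Real.sqrt p)) ^ (1 / (2 * α)))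
          + ∑ i, (θstar i) ^ 2 / (v i) := by
          rw [Finset.sum_add_distrib, Finset.sum_add_distrib, Finset.sum_const,
            Finset.card_univ, Fintype.card_fin, nsmul_eq_mul]
      _ ≤ 3 * (C * NN) + 4 * α * C ^ ((1 / (2 * α) + 1) / 2) * NN + c₀ ^ 2 * NN := by
          have h3p : (p:ℝ) * 3 ≤ 3 * (C * NN) := by linarith [hpN]
          linarith [hsum1, hsum2]
      _ ≤ cc * NN := by
          rw [hcc_def]
          have expand : (4 * α * C ^ ((1 / (2 * α) + 1) / 2) + c₀ ^ 2 + 3 * C + 1) * NN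
              = 4 * α * C ^ ((1 / (2 * α) + 1) / 2) * NN + c₀ ^ 2 * NN + 3 * C * NN + NN := by
            ring
          have h3c : 3 * (C * NN) = 3 * C * NN := by ring
          linarith [hNN0.le]
  have hflip : ∑ i, (Real.log (ℓ i) - Real.log (Real.sqrt (2 * π * v i))
        - (θstar i) ^ 2 / (v i) - 1)
      = -∑ i, (Real.log (Real.sqrt (2 * π * v i)) - Real.log (ℓ i)
        + (θstar i) ^ 2 / (v i) + 1) := by
    rw [← Finset.sum_neg_distrib]
    exact Finset.sum_congr rfl fun i _ => by ring
  have hexp : -cc * (n:ℝ) * δ ^ 2 ≤ ∑ i, (Real.log (ℓ i)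
      - Real.log (Real.sqrt (2 * π * v i)) - (θstar i) ^ 2 / (v i) - 1) := by
    rw [hflip]
    have hE := hEst'
    rw [← hNδ] at hE
    linarith [hE]
  rw [h1]
  refine le_trans (le_trans ?_ h2) h3
  exact ENNReal.ofReal_le_ofReal (Real.exp_le_exp.mpr hexp)
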